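/- arXiv:2512.19905 — 4 statements merged into one kernel-verified Lean document; each statement's English description precedes it below -/
import Mathlib

section
/- For every α > 0 and R̂ > 0, the equation R·(1 − α·m_Σ(R)) = R̂ with m_Σ(R) = (1/d)Σᵢ λᵢ/(λᵢ+R) (λᵢ ≥ 0 fixed) has at least one solution R > 0, and if α ≤ 1 the map R ↦ R(1 − α m_Σ(R)) is strictly increasing on (0,∞), so the solution is unique. -/
/-- Existence of a positive solution of the renormalized-ridge fixed point
equation `R (1 − α m_Σ(R)) = R̂` with `m_Σ(R) = (1/d) ∑ᵢ λᵢ/(λᵢ+R)`, together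
with strict monotonicity (hence uniqueness) when `α ≤ 1`. -/
theorem stmt_6 (d : ℕ) (lam : Fin d → ℝ) (hlam : ∀ i, 0 ≤ lam i)
    (α Rhat : ℝ) (hα : 0 < α) (hRhat : 0 < Rhat) :
    (∃ R : ℝ, 0 < R ∧
        R * (1 - α * ((1 / (d : ℝ)) * ∑ i, lam i / (lam i + R))) = Rhat)
    ∧ (α ≤ 1 → StrictMonoOn
        (fun R : ℝ => R * (1 - α * ((1 / (d : ℝ)) * ∑ i, lam i / (lam i + R))))
        (Set.Ioi 0)) := by
  set f : ℝ → ℝ :=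
    fun R => R * (1 - α * ((1 / (d : ℝ)) * ∑ i, lam i / (lam i + R))) with hf
  constructor
  · -- existence
    set b : ℝ := Rhat + α * ((1 / (d : ℝ)) * ∑ i, lam i) with hbdef
    have hsumlam : 0 ≤ ∑ i, lam i := Finset.sum_nonneg fun i _ => hlam i
    have hd0 : (0:ℝ) ≤ 1 / (d:ℝ) := by positivity
    have hab : Rhat ≤ b := le_add_of_nonneg_right (by positivity)
    have hbpos : 0 < b := lt_of_lt_of_le hRhat hab
    have hcont : ContinuousOn f (Set.Icc Rhat b) := by
      apply ContinuousOn.mul continuousOn_id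
      apply ContinuousOn.sub continuousOn_const
      apply ContinuousOn.mul continuousOn_const
      apply ContinuousOn.mul continuousOn_const
      apply continuousOn_finset_sum
      intro i _
      apply ContinuousOn.div continuousOn_const
        (continuousOn_const.add continuousOn_id)
      intro x hx
      have hx0 : 0 < x := lt_of_lt_of_le hRhat hx.1
      have := hlam i
      intro h; simp only [Pi.add_apply, id] at h; linarith
    have hfa : f Rhat ≤ Rhat := by
      have hm : 0 ≤ ∑ i, lam i / (lam i + Rhat) :=
        Finset.sum_nonneg fun i _ => div_nonneg (hlam i) (by linarith [hlam i])
      have : 1 - α * ((1 / (d:ℝ)) * ∑ i, lam i / (lam i + Rhat)) ≤ 1 := by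
        have := mul_nonneg hα.le (mul_nonneg hd0 hm)
        linarith
      calc f Rhat ≤ Rhat * 1 := by
            apply mul_le_mul_of_nonneg_left this hRhat.le
        _ = Rhat := mul_one _
    have hfb : Rhat ≤ f b := by
      have hsum_le : ∑ i, b * (lam i / (lam i + b)) ≤ ∑ i, lam i := by
        apply Finset.sum_le_sum
        intro i _
        have h1 : 0 < lam i + b := by linarith [hlam i]
        rw [mul_div_assoc', div_le_iff₀ h1]
        nlinarith [hlam i]
      have hfb' : f b = b - α * ((1 / (d:ℝ)) * ∑ i, b * (lam i / (lam i + b))) := by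
        show b * (1 - α * ((1 / (d:ℝ)) * ∑ i, lam i / (lam i + b))) = _
        rw [← Finset.mul_sum]
        ring
      rw [hfb', hbdef]
      have : α * ((1 / (d:ℝ)) * ∑ i, b * (lam i / (lam i + b)))
          ≤ α * ((1 / (d:ℝ)) * ∑ i, lam i) := by
        apply mul_le_mul_of_nonneg_left _ hα.le
        exact mul_le_mul_of_nonneg_left hsum_le hd0
      linarith
    obtain ⟨R, hRmem, hfR⟩ := intermediate_value_Icc hab hcont ⟨hfa, hfb⟩
    exact ⟨R, lt_of_lt_of_le hRhat hRmem.1, hfR⟩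
  · -- strict monotonicity when α ≤ 1
    intro hα1
    rcases Nat.eq_zero_or_pos d with hd | hd
    · subst hd
      have : f = fun R : ℝ => R := by
        funext R
        show R * (1 - α * ((1 / ((0:ℕ) : ℝ)) * ∑ i : Fin 0, lam i / (lam i + R))) = R
        simp
      rw [this]
      exact fun x _ y _ h => h
    have hdR : (0:ℝ) < (d:ℝ) := by exact_mod_cast hd
    have key : ∀ R : ℝ, 0 < R →
        f R = (1 - α) * R + α * ((1 / (d:ℝ)) * ∑ i, R ^ 2 / (lam i + R)) := by
      intro R hR
      have hne : ∀ i, lam i + R ≠ 0 := fun i => by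
        have := hlam i; intro h; linarith
      have h1 : ∑ i, lam i / (lam i + R) = (d:ℝ) - ∑ i, R / (lam i + R) := by
        have : ∀ i ∈ Finset.univ, lam i / (lam i + R) = 1 - R / (lam i + R) := by
          intro i _
          rw [eq_sub_iff_add_eq, ← add_div, div_self (hne i)]
        rw [Finset.sum_congr rfl this, Finset.sum_sub_distrib]
        simp
      have h2 : ∑ i, R ^ 2 / (lam i + R) = R * ∑ i, R / (lam i + R) := by
        rw [Finset.mul_sum]
        apply Finset.sum_congr rfl
        intro i _
        rw [sq, mul_div_assoc]
      show R * (1 - α * ((1 / (d:ℝ)) * ∑ i, lam i / (lam i + R))) = _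
      rw [h1, h2]
      field_simp
      ring
    intro x hx y hy hxy
    simp only [Set.mem_Ioi] at hx hy
    rw [key x hx, key y hy]
    have hterm : ∀ i ∈ Finset.univ, x ^ 2 / (lam i + x) < y ^ 2 / (lam i + y) := by
      intro i _
      have h1 : 0 < lam i + x := by linarith [hlam i]
      have h2 : 0 < lam i + y := by linarith [hlam i]
      rw [div_lt_div_iff₀ h1 h2]
      nlinarith [mul_nonneg (mul_nonneg (hlam i) (by linarith : (0:ℝ) ≤ y - x))
          (by linarith : (0:ℝ) ≤ y + x),
        mul_pos (mul_pos hx hy) (sub_pos.mpr hxy)]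
    have hne : (Finset.univ : Finset (Fin d)).Nonempty := by
      simpa [Finset.univ_nonempty_iff] using Fin.pos_iff_nonempty.mp hd
    have hsum : ∑ i, x ^ 2 / (lam i + x) < ∑ i, y ^ 2 / (lam i + y) :=
      Finset.sum_lt_sum_of_nonempty hne hterm
    have h1 : (1 - α) * x ≤ (1 - α) * y :=
      mul_le_mul_of_nonneg_left hxy.le (by linarith)
    have h2 : α * ((1 / (d:ℝ)) * ∑ i, x ^ 2 / (lam i + x))
        < α * ((1 / (d:ℝ)) * ∑ i, y ^ 2 / (lam i + y)) := by
      apply mul_lt_mul_of_pos_left _ hα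
      apply mul_lt_mul_of_pos_left hsum (by positivity)
    linarith
end

section
/- Let F be the CDF of V = −W where W is noncentral chi-squared with 1 degree of freedom and noncentrality λ ≥ 0, so that the right endpoint of F is v_F = 0. Then lim_{v → 0⁻} (−v)·F'(v)/(1 − F(v)) = 1/2; that is, F satisfies the von Mises condition for the Weibull maximum domain of attraction with index α = 1/2. -/
open MeasureTheory ProbabilityTheory Filter

noncomputable def stmt10Phi : ℝ → ℝ := gaussianPDFReal 0 1

noncomputable def stmt10H : ℝ → ℝ := fun t => ∫ x in (0:ℝ)..t, stmt10Phi x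

lemma stmt10Phi_cont : Continuous stmt10Phi := by
  unfold stmt10Phi gaussianPDFReal; fun_prop

lemma stmt10Phi_intble : Integrable stmt10Phi := integrable_gaussianPDFReal 0 1

lemma stmt10Phi_pos (x : ℝ) : 0 < stmt10Phi x :=
  gaussianPDFReal_pos 0 1 x one_ne_zero

lemma stmt10H_deriv (t : ℝ) : HasDerivAt stmt10H (stmt10Phi t) t :=
  intervalIntegral.integral_hasDerivAt_right
    (stmt10Phi_intble.intervalIntegrable)
    (stmt10Phi_cont.stronglyMeasurable.stronglyMeasurableAtFilter)
    (stmt10Phi_cont.continuousAt)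

/-- derivative of `s ↦ H(-m+s) - H(-m-s)` -/
lemma stmt10D_deriv (m s : ℝ) :
    HasDerivAt (fun s => stmt10H (-m + s) - stmt10H (-m - s))
      (stmt10Phi (-m + s) + stmt10Phi (-m - s)) s := by
  have h1 : HasDerivAt (fun s : ℝ => stmt10H (-m + s)) (stmt10Phi (-m + s)) s := by
    have := (stmt10H_deriv (-m + s)).comp s ((hasDerivAt_id s).const_add (-m))
    simp only [mul_one] at this; exact this
  have h2 : HasDerivAt (fun s : ℝ => stmt10H (-m - s)) (-stmt10Phi (-m - s)) s := by
    have := (stmt10H_deriv (-m - s)).comp s ((hasDerivAt_id s).const_sub (-m))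
    simp only [mul_neg, mul_one] at this; exact this
  have := h1.sub h2
  simp only [sub_neg_eq_add] at this; exact this

lemma stmt10_key (m v : ℝ) (hv : v < 0) :
    (((gaussianReal 0 1).map (fun g : ℝ => -((g + m) ^ 2))) (Set.Iic v)).toReal
      = 1 - (stmt10H (-m + Real.sqrt (-v)) - stmt10H (-m - Real.sqrt (-v))) := by
  set s := Real.sqrt (-v) with hs_def
  have hs : 0 < s := Real.sqrt_pos.2 (by linarith)
  have hs2 : s ^ 2 = -v := Real.sq_sqrt (by linarith)
  have hmeas : Measurable fun g : ℝ => -((g + m) ^ 2) := by fun_prop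
  rw [Measure.map_apply hmeas measurableSet_Iic]
  have hset : (fun g : ℝ => -((g + m) ^ 2)) ⁻¹' Set.Iic v
      = (Set.Ioo (-m - s) (-m + s))ᶜ := by
    ext g
    simp only [Set.mem_preimage, Set.mem_Iic, Set.mem_compl_iff, Set.mem_Ioo, not_and_or,
      not_lt]
    constructor
    · intro h
      by_contra hc
      push_neg at hc
      obtain ⟨h1, h2⟩ := hc
      nlinarith
    · rintro (h | h) <;> nlinarith
  rw [hset]
  have hprob : IsProbabilityMeasure (gaussianReal 0 1) := by infer_instance
  have hIoo : gaussianReal 0 1 (Set.Ioo (-m - s) (-m + s))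
      = ENNReal.ofReal (∫ x in Set.Ioo (-m - s) (-m + s), stmt10Phi x) :=
    gaussianReal_apply_eq_integral 0 one_ne_zero _
  have hintnn : 0 ≤ ∫ x in Set.Ioo (-m - s) (-m + s), stmt10Phi x :=
    setIntegral_nonneg measurableSet_Ioo fun x _ => (stmt10Phi_pos x).le
  have hcompl : gaussianReal 0 1 (Set.Ioo (-m - s) (-m + s))ᶜ
      = 1 - gaussianReal 0 1 (Set.Ioo (-m - s) (-m + s)) := by
    rw [measure_compl measurableSet_Ioo (measure_ne_top _ _), measure_univ]
  rw [hcompl, ENNReal.toReal_sub_of_le prob_le_one ENNReal.one_ne_top]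
  have hIooval : (gaussianReal 0 1 (Set.Ioo (-m - s) (-m + s))).toReal
      = stmt10H (-m + s) - stmt10H (-m - s) := by
    rw [hIoo, ENNReal.toReal_ofReal hintnn]
    have hab : -m - s ≤ -m + s := by linarith
    have heq : ∫ x in Set.Ioo (-m - s) (-m + s), stmt10Phi x
        = ∫ x in (-m - s)..(-m + s), stmt10Phi x := by
      rw [intervalIntegral.integral_of_le hab, integral_Ioc_eq_integral_Ioo]
    rw [heq]
    rw [← intervalIntegral.integral_interval_sub_left
      (stmt10Phi_intble.intervalIntegrable) (stmt10Phi_intble.intervalIntegrable)]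
    rfl
  rw [hIooval]
  simp

/-- Von Mises condition for the Weibull MDA with index `1/2`: let `F` be the
CDF of `V = −W`, where `W = (G + √λ)²` is noncentral chi-squared with one
degree of freedom (`G ~ N(0,1)`, noncentrality `λ ≥ 0`), with right endpoint
`v_F = 0`. Then `F` is differentiable on `(−∞, 0)` and
`lim_{v → 0⁻} (−v) F'(v) / (1 − F(v)) = 1/2`. -/
theorem stmt_10 (lam : ℝ) (hlam : 0 ≤ lam)
    (F : ℝ → ℝ)
    (hF : ∀ v : ℝ, F v =
      (((gaussianReal 0 1).map
          (fun g : ℝ => -((g + Real.sqrt lam) ^ 2))) (Set.Iic v)).toReal) :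
    ∃ F' : ℝ → ℝ, (∀ v < 0, HasDerivAt F (F' v) v) ∧
      Tendsto (fun v : ℝ => (-v) * F' v / (1 - F v))
        (nhdsWithin 0 (Set.Iio 0)) (nhds (1 / 2)) := by
  set m : ℝ := Real.sqrt lam with hm_def
  -- the formula for F on negative reals
  have hFval : ∀ v < 0, F v
      = 1 - (stmt10H (-m + Real.sqrt (-v)) - stmt10H (-m - Real.sqrt (-v))) := by
    intro v hv
    rw [hF v]
    exact stmt10_key m v hv
  refine ⟨fun v => (stmt10Phi (-m + Real.sqrt (-v)) + stmt10Phi (-m - Real.sqrt (-v)))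
      / (2 * Real.sqrt (-v)), ?_, ?_⟩
  · intro v hv
    have hsv : 0 < Real.sqrt (-v) := Real.sqrt_pos.2 (by linarith)
    -- derivative of v ↦ √(-v)
    have hsqrt : HasDerivAt (fun v : ℝ => Real.sqrt (-v))
        ((1 / (2 * Real.sqrt (-v))) * (-1)) v := by
      exact (Real.hasDerivAt_sqrt (by linarith : -v ≠ 0)).comp v (hasDerivAt_neg v)
    have hD := stmt10D_deriv m (Real.sqrt (-v))
    have hcomp : HasDerivAt
        (fun v : ℝ => 1 - (stmt10H (-m + Real.sqrt (-v)) - stmt10H (-m - Real.sqrt (-v))))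
        (-((stmt10Phi (-m + Real.sqrt (-v)) + stmt10Phi (-m - Real.sqrt (-v)))
          * ((1 / (2 * Real.sqrt (-v))) * (-1)))) v := by
      exact ((hD.comp v hsqrt).const_sub 1)
    have heq : (fun v : ℝ =>
        1 - (stmt10H (-m + Real.sqrt (-v)) - stmt10H (-m - Real.sqrt (-v)))) =ᶠ[nhds v] F := by
      filter_upwards [Iio_mem_nhds hv] with w hw
      exact (hFval w hw).symm
    have hfinal := hcomp.congr_of_eventuallyEq heq.symm
    convert hfinal using 1
    exacts [rfl, rfl, by ring]
  · -- the limit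
    set A : ℝ → ℝ := fun s => stmt10Phi (-m + s) + stmt10Phi (-m - s) with hA_def
    set D : ℝ → ℝ := fun s => stmt10H (-m + s) - stmt10H (-m - s) with hD_def
    have hD0 : D 0 = 0 := by simp [hD_def]
    have hA0 : A 0 = 2 * stmt10Phi (-m) := by simp [hA_def]; ring
    have hA0ne : A 0 ≠ 0 := by
      rw [hA0]
      have := stmt10Phi_pos (-m)
      positivity
    -- slope limit for D at 0
    have hDslope : Tendsto (fun s => D s / s) (nhdsWithin 0 {(0:ℝ)}ᶜ) (nhds (A 0)) := by
      have hder := (hasDerivAt_iff_tendsto_slope).1 (stmt10D_deriv m 0)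
      have : Tendsto (slope D 0) (nhdsWithin 0 {(0:ℝ)}ᶜ) (nhds (A 0)) := by
        simpa [hA_def, hD_def] using hder
      refine this.congr fun s => ?_
      simp [slope, hD0, div_eq_inv_mul]
    -- limit of A
    have hAcont : Tendsto (fun s => A s / 2) (nhdsWithin 0 {(0:ℝ)}ᶜ) (nhds (A 0 / 2)) := by
      apply Tendsto.mono_left _ nhdsWithin_le_nhds
      exact (((stmt10Phi_cont.comp (continuous_const.add continuous_id)).add
        (stmt10Phi_cont.comp (continuous_const.sub continuous_id))).div_const 2).continuousAt
    have hratio : Tendsto (fun s => (A s / 2) / (D s / s)) (nhdsWithin 0 {(0:ℝ)}ᶜ)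
        (nhds ((A 0 / 2) / A 0)) := hAcont.div hDslope hA0ne
    have hval : (A 0 / 2) / A 0 = 1 / 2 := by
      field_simp
    rw [hval] at hratio
    -- composition with v ↦ √(-v)
    have hsv : Tendsto (fun v : ℝ => Real.sqrt (-v)) (nhdsWithin 0 (Set.Iio 0))
        (nhdsWithin 0 {(0:ℝ)}ᶜ) := by
      rw [tendsto_nhdsWithin_iff]
      constructor
      · have hc : Tendsto (fun v : ℝ => Real.sqrt (-v)) (nhds 0) (nhds (Real.sqrt (-0))) :=
          (Real.continuous_sqrt.comp continuous_neg).continuousAt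
        simpa using hc.mono_left nhdsWithin_le_nhds
      · filter_upwards [self_mem_nhdsWithin] with v hv
        have hpos : (0:ℝ) < Real.sqrt (-v) := Real.sqrt_pos.2 (by simpa using hv)
        simp [hpos.ne']
    have hmain := hratio.comp hsv
    refine hmain.congr' ?_
    filter_upwards [self_mem_nhdsWithin] with v hv
    have hv0 : v < 0 := hv
    simp only [Function.comp]
    set s := Real.sqrt (-v) with hs_def
    have hsv0 : 0 < s := Real.sqrt_pos.2 (by linarith)
    have hs2 : s ^ 2 = -v := Real.sq_sqrt (by linarith)
    have h1F : 1 - F v = D s := by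
      rw [hFval v hv0]
      simp only [hD_def]
      ring
    rw [h1F, show -v = s ^ 2 from hs2.symm]
    simp only [hA_def, hD_def] at h1F ⊢
    by_cases hD' : stmt10H (-m + s) - stmt10H (-m - s) = 0
    · simp [hD']
    · field_simp
end

section
/- Let W be noncentral chi-squared with 1 degree of freedom and noncentrality λ ≥ 0, with CDF G. Then as ε → 0⁺, G(ε) = √(2ε/π)·e^{−λ/2}·(1 + o(1)); consequently the (1/k)-quantile satisfies G^{←}(1/k) = (π/2)·e^{λ}·k^{−2}·(1 + o(1)) as k → ∞. -/
open MeasureTheory ProbabilityTheory Filter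

noncomputable def pG : ℝ → ℝ := gaussianPDFReal 0 1
noncomputable def FG : ℝ → ℝ := fun y => ∫ t in (0:ℝ)..y, pG t
noncomputable def HG (lam : ℝ) : ℝ → ℝ :=
  fun s => FG (s - Real.sqrt lam) - FG (-s - Real.sqrt lam)

lemma pG_cont : Continuous pG := by unfold pG gaussianPDFReal; fun_prop
lemma pG_pos (x : ℝ) : 0 < pG x := gaussianPDFReal_pos 0 1 x one_ne_zero
lemma pG_int : Integrable pG := integrable_gaussianPDFReal 0 1

lemma FG_deriv (y : ℝ) : HasDerivAt FG (pG y) y :=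
  intervalIntegral.integral_hasDerivAt_right (pG_int.intervalIntegrable)
    (pG_cont.stronglyMeasurable.stronglyMeasurableAtFilter) pG_cont.continuousAt

lemma HG_deriv (lam s : ℝ) :
    HasDerivAt (HG lam) (pG (s - Real.sqrt lam) + pG (-s - Real.sqrt lam)) s := by
  have h1 : HasDerivAt (fun s : ℝ => FG (s - Real.sqrt lam)) (pG (s - Real.sqrt lam) * 1) s :=
    (FG_deriv _).comp s ((hasDerivAt_id s).sub_const _)
  have h2 : HasDerivAt (fun s : ℝ => FG (-s - Real.sqrt lam)) (pG (-s - Real.sqrt lam) * (-1)) s :=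
    (FG_deriv _).comp s (((hasDerivAt_id s).neg).sub_const _)
  have := h1.sub h2
  exact this.congr_deriv (by ring)

lemma HG_mono (lam : ℝ) : StrictMono (HG lam) := by
  apply strictMono_of_deriv_pos
  intro x
  rw [(HG_deriv lam x).deriv]
  have := pG_pos (x - Real.sqrt lam)
  have := pG_pos (-x - Real.sqrt lam)
  linarith

lemma HG_cont (lam : ℝ) : Continuous (HG lam) := by
  have : Differentiable ℝ (HG lam) := fun x => (HG_deriv lam x).differentiableAt
  exact this.continuous

lemma HG_zero (lam : ℝ) : HG lam 0 = 0 := by simp [HG]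

lemma Gmap (lam : ℝ) {x : ℝ} (hx : 0 ≤ x) :
    (((gaussianReal 0 1).map (fun g : ℝ => (g + Real.sqrt lam) ^ 2)) (Set.Iic x)).toReal
      = HG lam (Real.sqrt x) := by
  have hmeas : Measurable fun g : ℝ => (g + Real.sqrt lam) ^ 2 := by fun_prop
  rw [Measure.map_apply hmeas measurableSet_Iic]
  have hset : (fun g : ℝ => (g + Real.sqrt lam)^2) ⁻¹' Set.Iic x
      = Set.Icc (-Real.sqrt x - Real.sqrt lam) (Real.sqrt x - Real.sqrt lam) := by
    ext g
    simp only [Set.mem_preimage, Set.mem_Iic, Set.mem_Icc]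
    constructor
    · intro h
      have habs : |g + Real.sqrt lam| ≤ Real.sqrt x := by
        rw [← Real.sqrt_sq_eq_abs]; exact Real.sqrt_le_sqrt h
      rw [abs_le] at habs
      exact ⟨by linarith [habs.1], by linarith [habs.2]⟩
    · rintro ⟨h1, h2⟩
      have habs : |g + Real.sqrt lam| ≤ Real.sqrt x := abs_le.2 ⟨by linarith, by linarith⟩
      calc (g + Real.sqrt lam)^2 = |g + Real.sqrt lam|^2 := (sq_abs _).symm
        _ ≤ (Real.sqrt x)^2 := by
            exact pow_le_pow_left₀ (abs_nonneg _) habs 2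
        _ = x := Real.sq_sqrt hx
  rw [hset, gaussianReal_apply_eq_integral 0 one_ne_zero,
    ENNReal.toReal_ofReal (setIntegral_nonneg measurableSet_Icc
      (fun t _ => gaussianPDFReal_nonneg 0 1 t))]
  have hab : -Real.sqrt x - Real.sqrt lam ≤ Real.sqrt x - Real.sqrt lam := by
    have := Real.sqrt_nonneg x; linarith
  rw [integral_Icc_eq_integral_Ioc, ← intervalIntegral.integral_of_le hab]
  show _ = FG (Real.sqrt x - Real.sqrt lam) - FG (-Real.sqrt x - Real.sqrt lam)
  rw [show FG (Real.sqrt x - Real.sqrt lam) - FG (-Real.sqrt x - Real.sqrt lam)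
      = ∫ t in (-Real.sqrt x - Real.sqrt lam)..(Real.sqrt x - Real.sqrt lam), pG t from
    intervalIntegral.integral_interval_sub_left pG_int.intervalIntegrable
      pG_int.intervalIntegrable]
  rfl

lemma Gmap_neg (lam : ℝ) {x : ℝ} (hx : x < 0) :
    (((gaussianReal 0 1).map (fun g : ℝ => (g + Real.sqrt lam) ^ 2)) (Set.Iic x)).toReal
      = 0 := by
  have hmeas : Measurable fun g : ℝ => (g + Real.sqrt lam) ^ 2 := by fun_prop
  rw [Measure.map_apply hmeas measurableSet_Iic]
  have : (fun g : ℝ => (g + Real.sqrt lam)^2) ⁻¹' Set.Iic x = ∅ := by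
    ext g
    simp only [Set.mem_preimage, Set.mem_Iic, Set.mem_empty_iff_false, iff_false, not_le]
    exact lt_of_lt_of_le hx (sq_nonneg _)
  rw [this]; simp

lemma pG_val (lam : ℝ) (hlam : 0 ≤ lam) :
    pG (-Real.sqrt lam) = (Real.sqrt (2 * Real.pi))⁻¹ * Real.exp (-lam / 2) := by
  unfold pG gaussianPDFReal
  norm_num [neg_sq, Real.sq_sqrt hlam, neg_div]

lemma Lval (lam : ℝ) (hlam : 0 ≤ lam) :
    2 * pG (-Real.sqrt lam) = Real.sqrt (2 / Real.pi) * Real.exp (-lam / 2) := by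
  rw [pG_val lam hlam]
  have hpi := Real.pi_pos
  have key : Real.sqrt (2 / Real.pi) * Real.sqrt (2 * Real.pi) = 2 := by
    rw [← Real.sqrt_mul (by positivity)]
    rw [show 2 / Real.pi * (2 * Real.pi) = 4 by field_simp; ring]
    rw [show (4:ℝ) = 2 ^ 2 by norm_num, Real.sqrt_sq (by norm_num)]
  have hs : (0:ℝ) < Real.sqrt (2 * Real.pi) := Real.sqrt_pos.2 (by positivity)
  have h2 : 2 * (Real.sqrt (2 * Real.pi))⁻¹ = Real.sqrt (2 / Real.pi) :=
    mul_right_cancel₀ hs.ne'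
      (by rw [mul_assoc, inv_mul_cancel₀ hs.ne', mul_one]; exact key.symm)
  rw [← mul_assoc, h2]

lemma sqrt_tendsto : Tendsto Real.sqrt (nhdsWithin 0 (Set.Ioi 0)) (nhdsWithin 0 (Set.Ioi 0)) := by
  rw [tendsto_nhdsWithin_iff]
  constructor
  · have : Tendsto Real.sqrt (nhds 0) (nhds (Real.sqrt 0)) := Real.continuous_sqrt.tendsto 0
    simpa using this.mono_left nhdsWithin_le_nhds
  · filter_upwards [self_mem_nhdsWithin] with x hx
    exact Real.sqrt_pos.2 hx

lemma part1 (lam : ℝ) (hlam : 0 ≤ lam) :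
    Tendsto (fun ε : ℝ =>
        HG lam (Real.sqrt ε) / (Real.sqrt (2 * ε / Real.pi) * Real.exp (-lam / 2)))
      (nhdsWithin 0 (Set.Ioi 0)) (nhds 1) := by
  set L : ℝ := Real.sqrt (2 / Real.pi) * Real.exp (-lam / 2) with hLdef
  have hL : 0 < L := by positivity
  have hslope : Tendsto (fun s : ℝ => HG lam s / s) (nhdsWithin 0 (Set.Ioi 0))
      (nhds (2 * pG (-Real.sqrt lam))) := by
    have h0 := (hasDerivAt_iff_tendsto_slope).mp (HG_deriv lam 0)
    have h0' : Tendsto (slope (HG lam) 0) (nhdsWithin 0 (Set.Ioi 0))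
        (nhds (pG (0 - Real.sqrt lam) + pG (-0 - Real.sqrt lam))) :=
      h0.mono_left (nhdsWithin_mono 0 (fun x hx => ne_of_gt hx))
    have heq : ∀ s : ℝ, slope (HG lam) 0 s = HG lam s / s := by
      intro s
      simp [slope_def_field, HG_zero]
    rw [show pG (0 - Real.sqrt lam) + pG (-0 - Real.sqrt lam) = 2 * pG (-Real.sqrt lam) by
      norm_num; ring] at h0'
    exact h0'.congr heq
  have hcomp : Tendsto (fun ε : ℝ => HG lam (Real.sqrt ε) / Real.sqrt ε)
      (nhdsWithin 0 (Set.Ioi 0)) (nhds (2 * pG (-Real.sqrt lam))) :=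
    hslope.comp sqrt_tendsto
  have hratio : Tendsto (fun ε : ℝ => (HG lam (Real.sqrt ε) / Real.sqrt ε) / L)
      (nhdsWithin 0 (Set.Ioi 0)) (nhds (2 * pG (-Real.sqrt lam) / L)) := hcomp.div_const L
  rw [show 2 * pG (-Real.sqrt lam) / L = 1 by rw [Lval lam hlam, ← hLdef, div_self hL.ne']]
    at hratio
  refine hratio.congr' ?_
  filter_upwards [self_mem_nhdsWithin] with ε (hε : 0 < ε)
  have hsε : 0 < Real.sqrt ε := Real.sqrt_pos.2 hε
  have hsplit : Real.sqrt (2 * ε / Real.pi) = Real.sqrt ε * Real.sqrt (2 / Real.pi) := by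
    rw [show 2 * ε / Real.pi = ε * (2 / Real.pi) by ring, Real.sqrt_mul hε.le]
  rw [hsplit, div_div, mul_assoc]

/-- Small-argument asymptotics of the CDF `G` of a noncentral chi-squared
variable `W = (G₀ + √λ)²` with one degree of freedom:
`G(ε) = √(2ε/π) e^{−λ/2} (1 + o(1))` as `ε → 0⁺`, and consequently the
`(1/k)`-quantile satisfies `G^{←}(1/k) = (π/2) e^{λ} k^{−2} (1 + o(1))`
as `k → ∞`. -/
theorem stmt_11 (lam : ℝ) (hlam : 0 ≤ lam)
    (G : ℝ → ℝ)
    (hG : ∀ x : ℝ, G x =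
      (((gaussianReal 0 1).map
          (fun g : ℝ => (g + Real.sqrt lam) ^ 2)) (Set.Iic x)).toReal)
    (Ginv : ℝ → ℝ) (hGinv : ∀ t : ℝ, Ginv t = sInf {x : ℝ | t ≤ G x}) :
    Tendsto (fun ε : ℝ =>
        G ε / (Real.sqrt (2 * ε / Real.pi) * Real.exp (-lam / 2)))
      (nhdsWithin 0 (Set.Ioi 0)) (nhds 1)
    ∧ Tendsto (fun k : ℕ =>
        Ginv (1 / k) / ((Real.pi / 2) * Real.exp lam / (k : ℝ) ^ 2))
      atTop (nhds 1) := by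
  have hGpos : ∀ x : ℝ, 0 ≤ x → G x = HG lam (Real.sqrt x) := fun x hx =>
    (hG x).trans (Gmap lam hx)
  have hGneg : ∀ x : ℝ, x < 0 → G x = 0 := fun x hx => (hG x).trans (Gmap_neg lam hx)
  have hG0 : G 0 = 0 := by rw [hGpos 0 le_rfl]; simpa using HG_zero lam
  have hGsm : ∀ a b : ℝ, 0 ≤ a → a < b → G a < G b := by
    intro a b ha hab
    rw [hGpos a ha, hGpos b (ha.trans hab.le)]
    exact HG_mono lam (Real.sqrt_lt_sqrt ha hab)
  have hGmono : ∀ a b : ℝ, 0 ≤ a → a ≤ b → G a ≤ G b := by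
    intro a b ha hab
    rcases eq_or_lt_of_le hab with rfl | h
    · exact le_rfl
    · exact (hGsm a b ha h).le
  -- conclusion 1
  have hconc1 : Tendsto (fun ε : ℝ =>
      G ε / (Real.sqrt (2 * ε / Real.pi) * Real.exp (-lam / 2)))
      (nhdsWithin 0 (Set.Ioi 0)) (nhds 1) := by
    refine (part1 lam hlam).congr' ?_
    filter_upwards [self_mem_nhdsWithin] with ε (hε : 0 < ε)
    rw [hGpos ε hε.le]
  refine ⟨hconc1, ?_⟩
  -- G tends to 1 at infinity
  have hmeas : Measurable fun g : ℝ => (g + Real.sqrt lam) ^ 2 := by fun_prop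
  have hprob : IsProbabilityMeasure ((gaussianReal 0 1).map
      (fun g : ℝ => (g + Real.sqrt lam) ^ 2)) :=
    Measure.isProbabilityMeasure_map hmeas.aemeasurable
  have hGtop : Tendsto G atTop (nhds 1) := by
    have h1 := tendsto_measure_Iic_atTop ((gaussianReal 0 1).map
      (fun g : ℝ => (g + Real.sqrt lam) ^ 2))
    rw [measure_univ] at h1
    have h2 := (ENNReal.tendsto_toReal (by norm_num : (1 : ENNReal) ≠ ⊤)).comp h1
    simp only [ENNReal.toReal_one] at h2
    exact h2.congr (fun x => (hG x).symm)
  obtain ⟨B, hB0, hB2⟩ : ∃ B : ℝ, 0 ≤ B ∧ 1/2 ≤ G B := by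
    have h1 : ∀ᶠ x in atTop, 1/2 ≤ G x :=
      hGtop.eventually (eventually_ge_nhds (by norm_num))
    obtain ⟨B, h, h'⟩ := (h1.and (eventually_ge_atTop (0:ℝ))).exists
    exact ⟨B, h', h⟩
  have hGcont : ContinuousOn G (Set.Icc 0 B) := by
    refine (((HG_cont lam).comp Real.continuous_sqrt).continuousOn).congr ?_
    intro x hx
    exact hGpos x hx.1
  -- quantile identification
  have hxk : ∀ k : ℕ, 2 ≤ k →
      0 < Ginv (1 / (k:ℝ)) ∧ G (Ginv (1 / (k:ℝ))) = 1 / (k:ℝ) := by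
    intro k hk
    have hkpos : (0:ℝ) < (k:ℝ) := by exact_mod_cast Nat.lt_of_lt_of_le two_pos hk
    have hk0 : (0:ℝ) < 1 / (k:ℝ) := by positivity
    have hk2 : 1 / (k:ℝ) ≤ 1 / 2 := by
      apply one_div_le_one_div_of_le (by norm_num)
      exact_mod_cast hk
    have hmem : (1:ℝ) / (k:ℝ) ∈ Set.Icc (G 0) (G B) :=
      ⟨by rw [hG0]; exact hk0.le, by linarith⟩
    obtain ⟨x, hxmem, hxval⟩ := intermediate_value_Icc hB0 hGcont hmem
    have hxpos : 0 < x := by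
      rcases eq_or_lt_of_le hxmem.1 with h | h
      · exfalso; rw [← h, hG0] at hxval; linarith
      · exact h
    have hGinvx : Ginv (1 / (k:ℝ)) = x := by
      rw [hGinv]
      apply IsLeast.csInf_eq
      constructor
      · exact hxval.symm.le
      · intro y hy
        by_contra hc
        push_neg at hc
        rcases lt_or_ge y 0 with hy0 | hy0
        · rw [Set.mem_setOf_eq, hGneg y hy0] at hy; linarith
        · have := hGsm y x hy0 hc
          rw [hxval] at this
          exact absurd hy (by rw [Set.mem_setOf_eq]; push_neg; exact this)
    rw [hGinvx]
    exact ⟨hxpos, hxval⟩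
  -- Ginv (1/k) tends to 0 from the right
  have hten0 : Tendsto (fun k : ℕ => Ginv (1 / (k:ℝ))) atTop
      (nhdsWithin 0 (Set.Ioi 0)) := by
    rw [tendsto_nhdsWithin_iff]
    constructor
    · rw [tendsto_order]
      constructor
      · intro a ha
        filter_upwards [eventually_ge_atTop 2] with k hk
        exact lt_trans ha (hxk k hk).1
      · intro δ hδ
        have hGδ : 0 < G δ := by
          have := hGsm 0 δ le_rfl hδ
          rwa [hG0] at this
        have hev : ∀ᶠ k : ℕ in atTop, 1 / (k:ℝ) < G δ :=
          tendsto_one_div_atTop_nhds_zero_nat.eventually (eventually_lt_nhds hGδ)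
        filter_upwards [eventually_ge_atTop 2, hev] with k hk hklt
        by_contra hc
        push_neg at hc
        have h1 := hGmono δ _ hδ.le hc
        rw [(hxk k hk).2] at h1
        linarith
    · filter_upwards [eventually_ge_atTop 2] with k hk
      exact (hxk k hk).1
  -- compose
  have hrk : Tendsto (fun k : ℕ =>
      G (Ginv (1 / (k:ℝ))) /
        (Real.sqrt (2 * Ginv (1 / (k:ℝ)) / Real.pi) * Real.exp (-lam / 2)))
      atTop (nhds 1) := hconc1.comp hten0
  have hfin : Tendsto (fun k : ℕ =>
      ((G (Ginv (1 / (k:ℝ))) /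
        (Real.sqrt (2 * Ginv (1 / (k:ℝ)) / Real.pi) * Real.exp (-lam / 2)))⁻¹) ^ 2)
      atTop (nhds 1) := by
    have := (hrk.inv₀ one_ne_zero).pow 2
    simpa only [inv_one, one_pow] using this
  refine hfin.congr' ?_
  filter_upwards [eventually_ge_atTop 2] with k hk
  obtain ⟨hxpos, hxval⟩ := hxk k hk
  set x := Ginv (1 / (k:ℝ))
  have hkpos : (0:ℝ) < (k:ℝ) := by exact_mod_cast Nat.lt_of_lt_of_le two_pos hk
  have hpi := Real.pi_pos
  have hsq : Real.sqrt (2 * x / Real.pi) ^ 2 = 2 * x / Real.pi :=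
    Real.sq_sqrt (by positivity)
  have hexp : Real.exp (-lam / 2) ^ 2 = Real.exp (-lam) := by
    rw [sq, ← Real.exp_add]; congr 1; ring
  have hD : 0 < Real.sqrt (2 * x / Real.pi) * Real.exp (-lam / 2) := by
    have : 0 < Real.sqrt (2 * x / Real.pi) := Real.sqrt_pos.2 (by positivity)
    positivity
  rw [hxval]
  have hinv : ((1 / (k:ℝ)) / (Real.sqrt (2 * x / Real.pi) * Real.exp (-lam / 2)))⁻¹
      = (k:ℝ) * (Real.sqrt (2 * x / Real.pi) * Real.exp (-lam / 2)) := by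
    rw [one_div, div_eq_mul_inv, mul_inv, inv_inv, inv_inv]
  rw [hinv, mul_pow, mul_pow, hsq, hexp]
  rw [Real.exp_neg]
  have hexpos := Real.exp_pos lam
  field_simp
end

section
/- Let W_1, …, W_k be i.i.d. noncentral chi-squared with 1 degree of freedom and noncentrality λ ≥ 0, and let M_k = min(W_1, …, W_k). Then lim_{k→∞} k²·E[M_k] = π·e^{λ}. -/
open MeasureTheory ProbabilityTheory Filter
open Real Set
noncomputable def phi (x : ℝ) : ℝ := (Real.sqrt (2 * Real.pi))⁻¹ * Real.exp (-x ^ 2 / 2)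

lemma phi_eq_gaussian : gaussianPDFReal 0 1 = phi := by
  funext x; simp [gaussianPDFReal, phi]

lemma phi_pos (x : ℝ) : 0 < phi x := by
  have h : 0 < Real.sqrt (2 * Real.pi) := Real.sqrt_pos.2 (by positivity)
  exact mul_pos (inv_pos.2 h) (Real.exp_pos _)

lemma sqrt_two_pi_gt_two : 2 < Real.sqrt (2 * Real.pi) := by
  have h : (4:ℝ) < 2 * Real.pi := by nlinarith [Real.pi_gt_three]
  nlinarith [Real.sq_sqrt (show (0:ℝ) ≤ 2 * Real.pi by positivity),
    Real.sqrt_nonneg (2 * Real.pi)]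

lemma phi_anti {x y : ℝ} (h : x ^ 2 ≤ y ^ 2) : phi y ≤ phi x := by
  have := Real.exp_le_exp.2 (show -y^2/2 ≤ -x^2/2 by linarith)
  exact mul_le_mul_of_nonneg_left this (by positivity)

lemma phi_le (x : ℝ) : phi x ≤ (Real.sqrt (2 * Real.pi))⁻¹ := by
  have : Real.exp (-x^2/2) ≤ 1 := Real.exp_le_one_iff.2 (by nlinarith [sq_nonneg x])
  calc phi x ≤ (Real.sqrt (2 * Real.pi))⁻¹ * 1 :=
        mul_le_mul_of_nonneg_left this (by positivity)
    _ = _ := mul_one _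

lemma phi_hasDerivAt (x : ℝ) :
    HasDerivAt phi ((Real.sqrt (2 * Real.pi))⁻¹ * (Real.exp (-x ^ 2 / 2) * (-x))) x := by
  have h1 : HasDerivAt (fun x : ℝ => -x ^ 2 / 2) (-x) x := by
    have := ((hasDerivAt_pow 2 x).neg).div_const 2
    refine this.congr_deriv ?_
    ring
  exact (h1.exp).const_mul _

lemma phi_lip (a b : ℝ) : |phi a - phi b| ≤ |a - b| := by
  have key : ∀ x ∈ (Set.univ : Set ℝ), ‖deriv phi x‖ ≤ 1 := by
    intro x _
    rw [(phi_hasDerivAt x).deriv]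
    rw [Real.norm_eq_abs, abs_mul, abs_mul]
    have h1 : |(Real.sqrt (2 * Real.pi))⁻¹| ≤ 2⁻¹ := by
      rw [abs_of_nonneg (by positivity)]
      exact inv_anti₀ (by norm_num) sqrt_two_pi_gt_two.le
    have h2 : |Real.exp (-x ^ 2 / 2)| * |(-x)| ≤ 2 := by
      rw [abs_of_nonneg (Real.exp_pos _).le, abs_neg]
      have h3 : |x| ≤ Real.exp (x ^ 2 / 2) := by
        have e1 : x ^ 2 / 2 + 1 ≤ Real.exp (x ^ 2 / 2) := Real.add_one_le_exp _
        nlinarith [sq_abs x, sq_nonneg (|x| - 1)]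
      have hb : Real.exp (-x ^ 2 / 2) * |x| ≤ 1 := by
        rw [show -x ^ 2 / 2 = -(x ^ 2 / 2) by ring, Real.exp_neg]
        rw [inv_mul_eq_div, div_le_one (Real.exp_pos _)]
        exact h3
      linarith
    calc |(Real.sqrt (2 * Real.pi))⁻¹| * (|Real.exp (-x ^ 2 / 2)| * |(-x)|)
        ≤ 2⁻¹ * 2 := mul_le_mul h1 h2 (by positivity) (by norm_num)
      _ = 1 := by norm_num
  have := Convex.norm_image_sub_le_of_norm_deriv_le
    (fun x _ => (phi_hasDerivAt x).differentiableAt) key convex_univ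
    (Set.mem_univ b) (Set.mem_univ a)
  simpa [Real.norm_eq_abs] using this

lemma phi_integrable : Integrable phi := phi_eq_gaussian ▸ integrable_gaussianPDFReal 0 1

lemma phi_total : (∫ x, phi x) = 1 :=
  phi_eq_gaussian ▸ integral_gaussianPDFReal_eq_one 0 (v := 1) one_ne_zero

lemma phi_cont : Continuous phi := by
  unfold phi; fun_prop

lemma phi_shift_integrable (r : ℝ) : Integrable (fun u : ℝ => phi (u - r)) :=
  phi_integrable.comp_sub_right r

lemma phi_shift_total (r : ℝ) : (∫ u : ℝ, phi (u - r)) = 1 := by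
  rw [integral_sub_right_eq_self phi r]; exact phi_total

noncomputable def Fr (r x : ℝ) : ℝ := ∫ u in (-x)..x, phi (u - r)

lemma F_nonneg (r : ℝ) {x : ℝ} (hx : 0 ≤ x) : 0 ≤ Fr r x :=
  intervalIntegral.integral_nonneg (by linarith) (fun u _ => (phi_pos _).le)

lemma F_compl (r x : ℝ) :
    1 - Fr r x = (∫ u in Ioi x, phi (u - r)) + ∫ u in Iic (-x), phi (u - r) := by
  have hint := phi_shift_integrable r
  have h1 : Fr r x = (∫ u in Iic x, phi (u - r)) - ∫ u in Iic (-x), phi (u - r) :=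
    (intervalIntegral.integral_Iic_sub_Iic hint.integrableOn hint.integrableOn).symm
  have h2 : ((∫ u in Iic x, phi (u - r)) + ∫ u in Ioi x, phi (u - r))
      = ∫ u : ℝ, phi (u - r) :=
    intervalIntegral.integral_Iic_add_Ioi hint.integrableOn hint.integrableOn
  rw [phi_shift_total r] at h2
  linarith

lemma F_le_one (r : ℝ) {x : ℝ} : Fr r x ≤ 1 := by
  rcases le_or_gt x 0 with h | h
  · rcases eq_or_lt_of_le h with rfl | h'
    · simp [Fr]
    · rw [Fr, intervalIntegral.integral_symm, intervalIntegral.integral_of_le (by linarith)]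
      have : -(∫ u in Ioc x (-x), phi (u - r)) ≤ 0 := by
        simp only [neg_nonpos]
        exact setIntegral_nonneg measurableSet_Ioc (fun u _ => (phi_pos _).le)
      linarith
  · have := F_compl r x
    have h1 : 0 ≤ ∫ u in Ioi x, phi (u - r) :=
      setIntegral_nonneg measurableSet_Ioi (fun u _ => (phi_pos _).le)
    have h2 : 0 ≤ ∫ u in Iic (-x), phi (u - r) :=
      setIntegral_nonneg measurableSet_Iic (fun u _ => (phi_pos _).le)
    linarith

lemma F_lt_one (r : ℝ) (x : ℝ) : Fr r x < 1 := by
  have h := F_compl r x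
  have h1 : 0 < ∫ u in Ioi x, phi (u - r) := by
    refine (setIntegral_pos_iff_support_of_nonneg_ae ?_ ?_).2 ?_
    · exact ae_of_all _ (fun u => (phi_pos _).le)
    · exact (phi_shift_integrable r).integrableOn
    · have : (Function.support fun u => phi (u - r)) = Set.univ := by
        ext u; simp [Function.support, (phi_pos (u - r)).ne']
      rw [this, Set.univ_inter]
      simp
  have h2 : 0 ≤ ∫ u in Iic (-x), phi (u - r) :=
    setIntegral_nonneg measurableSet_Iic (fun u _ => (phi_pos _).le)
  linarith

lemma F_upper (r : ℝ) {x : ℝ} (hx : 0 ≤ x) :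
    Fr r x ≤ 2 * (Real.sqrt (2 * Real.pi))⁻¹ * x := by
  have h := intervalIntegral.norm_integral_le_of_norm_le_const
    (a := -x) (b := x) (C := (Real.sqrt (2 * Real.pi))⁻¹)
    (f := fun u => phi (u - r)) (fun u _ => by
      rw [Real.norm_eq_abs, abs_of_nonneg (phi_pos _).le]; exact phi_le _)
  rw [Real.norm_eq_abs] at h
  have h2 : |x - -x| = 2 * x := by rw [abs_of_nonneg (by linarith)]; ring
  calc Fr r x ≤ |Fr r x| := le_abs_self _
    _ ≤ (Real.sqrt (2 * Real.pi))⁻¹ * |x - -x| := h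
    _ = 2 * (Real.sqrt (2 * Real.pi))⁻¹ * x := by rw [h2]; ring

lemma F_linear (r : ℝ) {x : ℝ} (hx : 0 ≤ x) :
    |Fr r x - 2 * phi r * x| ≤ 2 * x ^ 2 := by
  have hphir : phi (-r) = phi r := by unfold phi; ring_nf
  have hconst : (∫ _ in (-x)..x, phi (-r)) = 2 * phi r * x := by
    rw [intervalIntegral.integral_const, smul_eq_mul, hphir]; ring
  have hsub : Fr r x - 2 * phi r * x = ∫ u in (-x)..x, (phi (u - r) - phi (-r)) := by
    rw [intervalIntegral.integral_sub _ (intervalIntegrable_const), hconst]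
    · rfl
    · exact (phi_cont.comp (continuous_id.sub continuous_const)).intervalIntegrable _ _
  rw [hsub]
  have h := intervalIntegral.norm_integral_le_of_norm_le_const
    (a := -x) (b := x) (C := x)
    (f := fun u => phi (u - r) - phi (-r)) (fun u hu => by
      rw [Set.uIoc_of_le (by linarith : -x ≤ x)] at hu
      rw [Real.norm_eq_abs]
      calc |phi (u - r) - phi (-r)| ≤ |u - r - -r| := phi_lip _ _
        _ = |u| := by ring_nf
        _ ≤ x := abs_le.2 ⟨hu.1.le, hu.2⟩)
  rw [Real.norm_eq_abs] at h
  have h2 : |x - -x| = 2 * x := by rw [abs_of_nonneg (by linarith)]; ring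
  calc |∫ u in (-x)..x, (phi (u - r) - phi (-r))| ≤ x * |x - -x| := h
    _ = 2 * x ^ 2 := by rw [h2]; ring

lemma F_lower (r : ℝ) {x : ℝ} (hx : 0 ≤ x) (hr : 0 ≤ r) :
    2 * phi (x + r) * x ≤ Fr r x := by
  have hconst : (∫ _ in (-x)..x, phi (x + r)) = 2 * phi (x + r) * x := by
    rw [intervalIntegral.integral_const, smul_eq_mul]; ring
  rw [← hconst, Fr]
  apply intervalIntegral.integral_mono_on (by linarith)
    intervalIntegrable_const
    ((phi_cont.comp (continuous_sub_right r)).intervalIntegrable _ _)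
  intro u hu
  show phi (x + r) ≤ phi (u - r)
  apply phi_anti
  nlinarith [hu.1, hu.2, mul_nonneg (show (0:ℝ) ≤ x - u + 2*r by linarith [hu.2])
    (show (0:ℝ) ≤ x + u by linarith [hu.1])]

lemma F_tail {r x : ℝ} (hr : 0 ≤ r) (hx : 2 * r + 2 ≤ x) :
    1 - Fr r x ≤ Real.exp (-x / 2) := by
  have hx0 : (0:ℝ) < x := by linarith
  have hC : (0:ℝ) < (Real.sqrt (2 * Real.pi))⁻¹ := by positivity
  -- right tail
  have hexpInt : IntegrableOn (fun u : ℝ => Real.exp (-u)) (Ioi x) := by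
    have := exp_neg_integrableOn_Ioi x (show (0:ℝ) < 1 by norm_num)
    simpa using this
  have h1 : (∫ u in Ioi x, phi (u - r))
      ≤ (Real.sqrt (2 * Real.pi))⁻¹ * Real.exp (x / 2) * Real.exp (-x) := by
    have hmono : (∫ u in Ioi x, phi (u - r))
        ≤ ∫ u in Ioi x, (Real.sqrt (2 * Real.pi))⁻¹ * Real.exp (x / 2) * Real.exp (-u) := by
      apply setIntegral_mono_on (phi_shift_integrable r).integrableOn
        ((hexpInt.const_mul _)) measurableSet_Ioi
      intro u hu
      rw [mem_Ioi] at hu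
      unfold phi
      rw [mul_assoc, ← Real.exp_add]
      apply mul_le_mul_of_nonneg_left _ hC.le
      apply Real.exp_le_exp.2
      nlinarith [mul_nonneg (show (0:ℝ) ≤ u by linarith) (show (0:ℝ) ≤ u - 2*r - 2 by linarith)]
    calc (∫ u in Ioi x, phi (u - r)) ≤ _ := hmono
      _ = (Real.sqrt (2 * Real.pi))⁻¹ * Real.exp (x / 2) * Real.exp (-x) := by
        rw [integral_const_mul, integral_exp_neg_Ioi]
  -- left tail
  have hexpInt2 : IntegrableOn Real.exp (Iic (-x)) := integrableOn_exp_Iic _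
  have h2 : (∫ u in Iic (-x), phi (u - r))
      ≤ (Real.sqrt (2 * Real.pi))⁻¹ * Real.exp (x / 2) * Real.exp (-x) := by
    have hmono : (∫ u in Iic (-x), phi (u - r))
        ≤ ∫ u in Iic (-x), (Real.sqrt (2 * Real.pi))⁻¹ * Real.exp (x / 2) * Real.exp u := by
      apply setIntegral_mono_on (phi_shift_integrable r).integrableOn
        ((hexpInt2.const_mul _)) measurableSet_Iic
      intro u hu
      rw [mem_Iic] at hu
      unfold phi
      rw [mul_assoc, ← Real.exp_add]
      apply mul_le_mul_of_nonneg_left _ hC.le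
      apply Real.exp_le_exp.2
      nlinarith [mul_nonneg (show (0:ℝ) ≤ -u by linarith) (show (0:ℝ) ≤ -u + 2*r - 2 by linarith)]
    calc (∫ u in Iic (-x), phi (u - r)) ≤ _ := hmono
      _ = (Real.sqrt (2 * Real.pi))⁻¹ * Real.exp (x / 2) * Real.exp (-x) := by
        rw [integral_const_mul, integral_exp_Iic]
  have hcompl := F_compl r x
  have hval : (Real.sqrt (2 * Real.pi))⁻¹ * Real.exp (x / 2) * Real.exp (-x)
      = (Real.sqrt (2 * Real.pi))⁻¹ * Real.exp (-x / 2) := by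
    rw [mul_assoc, ← Real.exp_add]; ring_nf
  rw [hval] at h1 h2
  have h3 : 2 * (Real.sqrt (2 * Real.pi))⁻¹ ≤ 1 := by
    have hs : 0 < Real.sqrt (2 * Real.pi) := by positivity
    rw [← one_div, mul_one_div, div_le_one hs]
    linarith [sqrt_two_pi_gt_two]
  nlinarith [Real.exp_pos (-x / 2), sqrt_two_pi_gt_two]

lemma log_one_sub_bound {y : ℝ} (h0 : 0 ≤ y) (h2 : y ≤ 1 / 2) :
    |Real.log (1 - y) + y| ≤ 2 * y ^ 2 := by
  have h1 : (0:ℝ) < 1 - y := by linarith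
  have hup : Real.log (1 - y) ≤ -y := by
    have := Real.log_le_sub_one_of_pos h1
    linarith
  have hlow : -y - 2 * y ^ 2 ≤ Real.log (1 - y) := by
    have hinv : (1 - y)⁻¹ ≤ 1 + y + 2 * y ^ 2 := by
      rw [← one_div, div_le_iff₀ h1]
      nlinarith
    have hlog := Real.log_le_sub_one_of_pos (show (0:ℝ) < (1 - y)⁻¹ by positivity)
    rw [Real.log_inv] at hlog
    nlinarith
  rw [abs_le]
  constructor <;> nlinarith

lemma tendsto_one_add_mul_exp : Tendsto (fun v : ℝ => (1 + v) * Real.exp (-v)) atTop (nhds 0) := by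
  have h1 : Tendsto (fun v : ℝ => Real.exp (-v)) atTop (nhds 0) :=
    Real.tendsto_exp_neg_atTop_nhds_zero
  have h2 : Tendsto (fun v : ℝ => v * Real.exp (-v)) atTop (nhds 0) := by
    have := Real.tendsto_pow_mul_exp_neg_atTop_nhds_zero 1
    simpa using this
  have := h1.add h2
  rw [add_zero] at this
  refine this.congr (fun v => by ring)

lemma exp_neg_sqrt_facts {b : ℝ} (hb : 0 < b) :
    IntegrableOn (fun s : ℝ => Real.exp (-(b * Real.sqrt s))) (Ioi (0:ℝ)) ∧
    (∫ s in Ioi (0:ℝ), Real.exp (-(b * Real.sqrt s))) = 2 / b ^ 2 := by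
  set g : ℝ → ℝ := fun s => -(2 / b ^ 2) * ((1 + b * Real.sqrt s) * Real.exp (-(b * Real.sqrt s)))
    with hg
  have hderiv : ∀ s ∈ Ioi (0:ℝ), HasDerivAt g (Real.exp (-(b * Real.sqrt s))) s := by
    intro s hs
    rw [mem_Ioi] at hs
    have hsq : Real.sqrt s ≠ 0 := by positivity
    have hu : HasDerivAt Real.sqrt (1 / (2 * Real.sqrt s)) s :=
      Real.hasDerivAt_sqrt (ne_of_gt hs)
    have h1 : HasDerivAt (fun s => b * Real.sqrt s) (b * (1 / (2 * Real.sqrt s))) s :=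
      hu.const_mul b
    have h2 : HasDerivAt (fun s => -(b * Real.sqrt s)) (-(b * (1 / (2 * Real.sqrt s)))) s :=
      h1.neg
    have h3 : HasDerivAt (fun s => Real.exp (-(b * Real.sqrt s)))
        (Real.exp (-(b * Real.sqrt s)) * -(b * (1 / (2 * Real.sqrt s)))) s := h2.exp
    have h4 : HasDerivAt (fun s => 1 + b * Real.sqrt s) (b * (1 / (2 * Real.sqrt s))) s :=
      (h1.const_add 1)
    have h5 := (h4.mul h3).const_mul (-(2 / b ^ 2))
    refine h5.congr_deriv ?_
    have hsq2 : Real.sqrt s * Real.sqrt s = s := Real.mul_self_sqrt hs.le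
    field_simp
    ring
  have hcont : ContinuousWithinAt g (Ici (0:ℝ)) 0 := by
    apply Continuous.continuousWithinAt
    fun_prop
  have hpos : ∀ s ∈ Ioi (0:ℝ), 0 ≤ Real.exp (-(b * Real.sqrt s)) :=
    fun s _ => (Real.exp_pos _).le
  have hlim : Tendsto g atTop (nhds 0) := by
    have hsq : Tendsto Real.sqrt atTop atTop := by
      apply tendsto_atTop_atTop.2
      intro c
      exact ⟨c ^ 2, fun a ha => by
        calc c ≤ |c| := le_abs_self c
          _ = Real.sqrt (c ^ 2) := (Real.sqrt_sq_eq_abs c).symm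
          _ ≤ Real.sqrt a := Real.sqrt_le_sqrt ha⟩
    have hcomp : Tendsto (fun s : ℝ => b * Real.sqrt s) atTop atTop :=
      Tendsto.const_mul_atTop hb hsq
    have := (tendsto_one_add_mul_exp.comp hcomp).const_mul (-(2 / b ^ 2))
    rw [mul_zero] at this
    exact this.congr (fun s => by simp [hg, Function.comp])
  constructor
  · exact integrableOn_Ioi_deriv_of_nonneg hcont hderiv hpos hlim
  · rw [integral_Ioi_of_hasDerivAt_of_nonneg hcont hderiv hpos hlim]
    simp [hg]

/-- Best-of-`k` limit: if `W₁,…,W_k` are i.i.d. noncentral chi-squared with one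
degree of freedom and noncentrality `λ ≥ 0` (CDF `G`), then the minimum
`M_k` is nonnegative, so `E[M_k] = ∫₀^∞ P(M_k > t) dt = ∫₀^∞ (1 − G(t))^k dt`,
and `lim_{k→∞} k² E[M_k] = π e^{λ}`. -/
theorem stmt_13 (lam : ℝ) (hlam : 0 ≤ lam)
    (G : ℝ → ℝ)
    (hG : ∀ x : ℝ, G x =
      (((gaussianReal 0 1).map
          (fun g : ℝ => (g + Real.sqrt lam) ^ 2)) (Set.Iic x)).toReal) :
    Tendsto (fun k : ℕ =>
        (k : ℝ) ^ 2 * ∫ t in Set.Ioi (0 : ℝ), (1 - G t) ^ k)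
      atTop (nhds (Real.pi * Real.exp lam)) := by
  have hTmeas : Measurable (fun g : ℝ => (g + Real.sqrt lam) ^ 2) := by fun_prop
  set r := Real.sqrt lam with hrdef
  have hr : 0 ≤ r := Real.sqrt_nonneg lam
  -- G in terms of Fr
  have hGF : ∀ t : ℝ, 0 ≤ t → G t = Fr r (Real.sqrt t) := by
    intro t ht
    rw [hG t, Measure.map_apply hTmeas measurableSet_Iic]
    have hpre : (fun g : ℝ => (g + Real.sqrt lam) ^ 2) ⁻¹' (Iic t)
        = Icc (-Real.sqrt t - r) (Real.sqrt t - r) := by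
      ext g
      simp only [mem_preimage, mem_Iic, mem_Icc, ← hrdef]
      constructor
      · intro h
        have habs : |g + r| ≤ Real.sqrt t := by
          rw [← Real.sqrt_sq_eq_abs]
          exact Real.sqrt_le_sqrt h
        rw [abs_le] at habs
        constructor <;> linarith [habs.1, habs.2]
      · rintro ⟨h1, h2⟩
        have habs : |g + r| ≤ Real.sqrt t := abs_le.2 ⟨by linarith, by linarith⟩
        calc (g + r) ^ 2 = |g + r| ^ 2 := (sq_abs _).symm
          _ ≤ (Real.sqrt t) ^ 2 := pow_le_pow_left₀ (abs_nonneg _) habs 2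
          _ = t := Real.sq_sqrt ht
    rw [hpre, gaussianReal_apply_eq_integral 0 one_ne_zero, ENNReal.toReal_ofReal
      (setIntegral_nonneg measurableSet_Icc (fun u _ => gaussianPDFReal_nonneg 0 1 u))]
    rw [phi_eq_gaussian, integral_Icc_eq_integral_Ioc,
      ← intervalIntegral.integral_of_le (by linarith [Real.sqrt_nonneg t])]
    rw [Fr, intervalIntegral.integral_comp_sub_right (fun u => phi u) r]
  set c := 2 * phi r with hcdef
  have hc : 0 < c := by
    have := phi_pos r; positivity
  -- value identity
  have hval : (∫ s in Ioi (0:ℝ), Real.exp (-(c * Real.sqrt s)))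
      = Real.pi * Real.exp lam := by
    rw [(exp_neg_sqrt_facts hc).2]
    have h1 : r ^ 2 = lam := Real.sq_sqrt hlam
    have h2 : (Real.sqrt (2 * Real.pi)) ^ 2 = 2 * Real.pi :=
      Real.sq_sqrt (by positivity)
    have hphir : phi r = (Real.sqrt (2 * Real.pi))⁻¹ * Real.exp (-lam / 2) := by
      unfold phi; rw [h1]
    have hsq : c ^ 2 = 2 / Real.pi * Real.exp (-lam) := by
      calc c ^ 2 = 4 * ((Real.sqrt (2 * Real.pi)) ^ 2)⁻¹
            * (Real.exp (-lam / 2) * Real.exp (-lam / 2)) := by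
            rw [hcdef, hphir]; ring
        _ = 4 * (2 * Real.pi)⁻¹ * Real.exp (-lam) := by
            rw [h2, ← Real.exp_add]; ring_nf
        _ = 2 / Real.pi * Real.exp (-lam) := by
            field_simp
            ring
    rw [hsq, Real.exp_neg]
    field_simp [Real.pi_ne_zero]
  -- pointwise limit
  have hpoint : ∀ s : ℝ, s ∈ Ioi (0:ℝ) →
      Tendsto (fun k : ℕ => (1 - G (s / (k:ℝ) ^ 2)) ^ k) atTop
        (nhds (Real.exp (-(c * Real.sqrt s)))) := by
    intro s hs
    rw [mem_Ioi] at hs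
    set y : ℕ → ℝ := fun k => Fr r (Real.sqrt s / k) with hy
    have hsx : ∀ k : ℕ, 1 ≤ k → G (s / (k:ℝ) ^ 2) = y k := by
      intro k hk
      have hk0 : (0:ℝ) < k := by exact_mod_cast hk
      rw [hGF _ (by positivity), hy]
      congr 1
      rw [Real.sqrt_div hs.le, Real.sqrt_sq hk0.le]
    have hxnn : ∀ k : ℕ, 1 ≤ k → (0:ℝ) ≤ Real.sqrt s / k := by
      intro k hk
      have hk0 : (0:ℝ) < k := by exact_mod_cast hk
      positivity
    have hsq : ∀ k : ℕ, 1 ≤ k → (Real.sqrt s / k) ^ 2 = s / (k:ℝ) ^ 2 := by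
      intro k hk
      rw [div_pow, Real.sq_sqrt hs.le]
    have h1 : Tendsto (fun k : ℕ => (k:ℝ) * y k) atTop (nhds (c * Real.sqrt s)) := by
      have hbnd : ∀ᶠ k : ℕ in atTop, ‖(k:ℝ) * y k - c * Real.sqrt s‖ ≤ 2 * s / k := by
        filter_upwards [eventually_ge_atTop 1] with k hk
        have hk0 : (0:ℝ) < k := by exact_mod_cast hk
        have hF := F_linear r (hxnn k hk)
        rw [hsq k hk] at hF
        rw [Real.norm_eq_abs]
        have hexpand : (k:ℝ) * y k - c * Real.sqrt s
            = (k:ℝ) * (y k - c * (Real.sqrt s / k)) := by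
          field_simp
        rw [hexpand, abs_mul, abs_of_nonneg hk0.le]
        calc (k:ℝ) * |y k - c * (Real.sqrt s / k)| ≤ (k:ℝ) * (2 * (s / (k:ℝ)^2)) := by
              exact mul_le_mul_of_nonneg_left hF hk0.le
          _ = 2 * s / k := by field_simp
      have h0 : Tendsto (fun k : ℕ => (k:ℝ) * y k - c * Real.sqrt s) atTop (nhds 0) :=
        squeeze_zero_norm' hbnd (tendsto_const_div_atTop_nhds_zero_nat (2 * s))
      have := h0.add_const (c * Real.sqrt s)
      simpa using this
    have hyup : ∀ᶠ k : ℕ in atTop, y k ≤ Real.sqrt s / k := by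
      filter_upwards [eventually_ge_atTop 1] with k hk
      have := F_upper r (hxnn k hk)
      have h2pi : 2 * (Real.sqrt (2 * Real.pi))⁻¹ ≤ 1 := by
        have hsp : 0 < Real.sqrt (2 * Real.pi) := by positivity
        rw [← one_div, mul_one_div, div_le_one hsp]
        linarith [sqrt_two_pi_gt_two]
      calc y k ≤ 2 * (Real.sqrt (2 * Real.pi))⁻¹ * (Real.sqrt s / k) := this
        _ ≤ 1 * (Real.sqrt s / k) := by
            apply mul_le_mul_of_nonneg_right h2pi (hxnn k hk)
        _ = Real.sqrt s / k := one_mul _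
    have hysmall : ∀ᶠ k : ℕ in atTop, y k ≤ 1 / 2 := by
      have htend : Tendsto (fun k : ℕ => Real.sqrt s / k) atTop (nhds 0) :=
        tendsto_const_div_atTop_nhds_zero_nat _
      filter_upwards [hyup, htend.eventually_lt_const (show (0:ℝ) < 1/2 by norm_num)]
        with k h1 h2
      linarith
    have h2 : Tendsto (fun k : ℕ => (k:ℝ) * (Real.log (1 - y k) + y k)) atTop (nhds 0) := by
      apply squeeze_zero_norm' _ (tendsto_const_div_atTop_nhds_zero_nat (2 * s))
      filter_upwards [eventually_ge_atTop 1, hyup, hysmall] with k hk hup hsm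
      have hk0 : (0:ℝ) < k := by exact_mod_cast hk
      have hynn : 0 ≤ y k := F_nonneg r (hxnn k hk)
      have hlog := log_one_sub_bound hynn hsm
      rw [Real.norm_eq_abs, abs_mul, abs_of_nonneg hk0.le]
      calc (k:ℝ) * |Real.log (1 - y k) + y k| ≤ (k:ℝ) * (2 * y k ^ 2) :=
            mul_le_mul_of_nonneg_left hlog hk0.le
        _ ≤ (k:ℝ) * (2 * (Real.sqrt s / k) ^ 2) := by
            apply mul_le_mul_of_nonneg_left _ hk0.le
            have : y k ^ 2 ≤ (Real.sqrt s / k) ^ 2 := pow_le_pow_left₀ hynn hup 2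
            linarith
        _ = 2 * s / k := by
            rw [hsq k hk]; field_simp
    have h3 : Tendsto (fun k : ℕ => (k:ℝ) * Real.log (1 - y k)) atTop
        (nhds (-(c * Real.sqrt s))) := by
      have := h2.sub h1
      rw [zero_sub] at this
      exact this.congr (fun k => by ring)
    have h4 := (Real.continuous_exp.tendsto _).comp h3
    apply h4.congr'
    filter_upwards [eventually_ge_atTop 1] with k hk
    have hlt := F_lt_one r (Real.sqrt s / k)
    have hpos : 0 < 1 - y k := by rw [hy]; simpa using (by linarith : Fr r (Real.sqrt s / k) < 1)
    simp only [Function.comp]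
    rw [← Real.log_pow, Real.exp_log (pow_pos hpos k), hsx k hk]
  -- domination
  set A := 2 * phi (3 * r + 2) with hA
  set B := min A 2⁻¹ with hB
  have hApos : 0 < A := by have := phi_pos (3 * r + 2); positivity
  have hBpos : 0 < B := lt_min hApos (by norm_num)
  have hbound : ∀ k : ℕ, 1 ≤ k → ∀ s ∈ Ioi (0:ℝ),
      ‖(1 - G (s / (k:ℝ) ^ 2)) ^ k‖ ≤ Real.exp (-(B * Real.sqrt s)) := by
    intro k hk s hs
    rw [mem_Ioi] at hs
    have hk0 : (0:ℝ) < k := by exact_mod_cast hk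
    set x := Real.sqrt s / k with hx
    have hxnn : 0 ≤ x := by positivity
    have hGx : G (s / (k:ℝ) ^ 2) = Fr r x := by
      rw [hGF _ (by positivity), hx, Real.sqrt_div hs.le, Real.sqrt_sq hk0.le]
    have hFnn : 0 ≤ Fr r x := F_nonneg r hxnn
    have hF1 : Fr r x ≤ 1 := F_le_one r
    have hkx : (k:ℝ) * x = Real.sqrt s := by rw [hx]; field_simp
    rw [hGx, Real.norm_eq_abs, abs_of_nonneg (pow_nonneg (by linarith) k)]
    rcases le_or_gt x (2 * r + 2) with hcase | hcase
    · -- small x : use lower bound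
      have hlow : A * x ≤ Fr r x := by
        have h1 : 2 * phi (x + r) * x ≤ Fr r x := F_lower r hxnn hr
        have h2 : phi (3 * r + 2) ≤ phi (x + r) := by
          apply phi_anti
          nlinarith
        nlinarith
      have hstep : 1 - Fr r x ≤ Real.exp (-(Fr r x)) := by
        have := Real.add_one_le_exp (-(Fr r x))
        linarith
      calc (1 - Fr r x) ^ k ≤ (Real.exp (-(Fr r x))) ^ k :=
            pow_le_pow_left₀ (by linarith) hstep k
        _ = Real.exp ((k:ℝ) * -(Fr r x)) := by rw [← Real.exp_nat_mul]
        _ ≤ Real.exp (-(B * Real.sqrt s)) := by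
            apply Real.exp_le_exp.2
            have : B * Real.sqrt s ≤ A * Real.sqrt s :=
              mul_le_mul_of_nonneg_right (min_le_left _ _) (Real.sqrt_nonneg s)
            have hAx : A * Real.sqrt s ≤ (k:ℝ) * Fr r x := by
              calc A * Real.sqrt s = (k:ℝ) * (A * x) := by rw [← hkx]; ring
                _ ≤ (k:ℝ) * Fr r x := mul_le_mul_of_nonneg_left hlow hk0.le
            linarith
    · -- large x : tail bound
      have htail : 1 - Fr r x ≤ Real.exp (-x / 2) := F_tail hr hcase.le
      calc (1 - Fr r x) ^ k ≤ (Real.exp (-x / 2)) ^ k :=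
            pow_le_pow_left₀ (by linarith) htail k
        _ = Real.exp ((k:ℝ) * (-x / 2)) := by rw [← Real.exp_nat_mul]
        _ ≤ Real.exp (-(B * Real.sqrt s)) := by
            apply Real.exp_le_exp.2
            have h1 : (k:ℝ) * (-x / 2) = -(Real.sqrt s / 2) := by
              rw [← hkx]; ring
            have h2 : B * Real.sqrt s ≤ 2⁻¹ * Real.sqrt s :=
              mul_le_mul_of_nonneg_right (min_le_right _ _) (Real.sqrt_nonneg s)
            rw [h1]
            linarith
  -- measurability of G
  have hGmeas : Measurable G := by
    have hprob : IsProbabilityMeasure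
        ((gaussianReal 0 1).map (fun g : ℝ => (g + Real.sqrt lam) ^ 2)) :=
      Measure.isProbabilityMeasure_map hTmeas.aemeasurable
    have hmono : Monotone G := by
      intro u v huv
      rw [hG u, hG v]
      exact ENNReal.toReal_mono (measure_ne_top _ _)
        (measure_mono (Iic_subset_Iic.2 huv))
    exact hmono.measurable
  -- dominated convergence
  have hmain : Tendsto (fun k : ℕ => ∫ s in Ioi (0:ℝ), (1 - G (s / (k:ℝ) ^ 2)) ^ k) atTop
      (nhds (∫ s in Ioi (0:ℝ), Real.exp (-(c * Real.sqrt s)))) := by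
    apply tendsto_integral_filter_of_dominated_convergence
      (fun s => Real.exp (-(B * Real.sqrt s)))
    · apply Eventually.of_forall
      intro k
      exact ((measurable_const.sub (hGmeas.comp (measurable_id.div_const _))).pow_const
        k).aestronglyMeasurable
    · filter_upwards [eventually_ge_atTop 1] with k hk
      rw [ae_restrict_iff' measurableSet_Ioi]
      exact ae_of_all _ (fun s hs => hbound k hk s hs)
    · exact (exp_neg_sqrt_facts hBpos).1
    · rw [ae_restrict_iff' measurableSet_Ioi]
      exact ae_of_all _ (fun s hs => hpoint s hs)
  rw [hval] at hmain
  apply hmain.congr'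
  filter_upwards [eventually_ge_atTop 1] with k hk
  have hk0 : (0:ℝ) < (k:ℝ) ^ 2 := by
    have : (0:ℝ) < k := by exact_mod_cast hk
    positivity
  have hcv := integral_comp_mul_left_Ioi (fun t => (1 - G t) ^ k) 0
    (b := ((k:ℝ) ^ 2)⁻¹) (inv_pos.2 hk0)
  rw [mul_zero, inv_inv, smul_eq_mul] at hcv
  rw [← hcv]
  apply setIntegral_congr_fun measurableSet_Ioi
  intro s _
  show (1 - G (s / (k:ℝ) ^ 2)) ^ k = (1 - G (((k:ℝ) ^ 2)⁻¹ * s)) ^ k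
  rw [div_eq_inv_mul]
end
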